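/- For every a ∈ [0, 1/2]: -(1-a) log(1+2a) - a log a ≥ 0, where the term a log a is taken to be 0 at a = 0. -/

import Mathlib

open Real

private lemma hasDerivAt_aux (x : ℝ) (hx1 : x + 1 ≠ 0) :
    HasDerivAt (fun y : ℝ => 2 * (y - 1) / (y + 1)) (4 / (x + 1) ^ 2) x := by
  have := (((hasDerivAt_id x).sub_const 1).const_mul 2).div
    ((hasDerivAt_id x).add_const 1) hx1
  refine this.congr_deriv ?_
  simp only [id]
  ring

/-- Padé-type lower bound: `log t ≥ 2(t-1)/(t+1)` for `t ≥ 1`. -/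
lemma pade_log_lower {t : ℝ} (ht : 1 ≤ t) : 2 * (t - 1) / (t + 1) ≤ Real.log t := by
  set f : ℝ → ℝ := fun x => Real.log x - 2 * (x - 1) / (x + 1) with hf
  have hd : ∀ x : ℝ, 0 < x → HasDerivAt f (x⁻¹ - 4 / (x + 1) ^ 2) x := by
    intro x hx0
    exact (Real.hasDerivAt_log hx0.ne').sub (hasDerivAt_aux x (by linarith))
  have hmono : MonotoneOn f (Set.Ici 1) := by
    apply monotoneOn_of_deriv_nonneg (convex_Ici 1)
    · intro x hx
      have hx0 : (0:ℝ) < x := by simp at hx; linarith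
      exact (hd x hx0).continuousAt.continuousWithinAt
    · intro x hx
      rw [interior_Ici] at hx
      have hx0 : (0:ℝ) < x := by simp at hx; linarith
      exact ((hd x hx0).differentiableAt.differentiableWithinAt)
    · intro x hx
      rw [interior_Ici] at hx
      simp only [Set.mem_Ioi] at hx
      have hx0 : (0:ℝ) < x := by linarith
      rw [(hd x hx0).deriv]
      have h3 : x⁻¹ - 4 / (x + 1) ^ 2 = (x - 1) ^ 2 / (x * (x + 1) ^ 2) := by
        field_simp
        ring
      rw [h3]
      positivity
  have h0 : f 1 = 0 := by simp [hf]
  have := hmono (Set.self_mem_Ici) (Set.mem_Ici.mpr ht) ht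
  rw [h0] at this
  simp only [hf] at this
  linarith

/-- For `0 < x ≤ 1`, `-log x ≥ 2(1-x)/(1+x)`. -/
lemma neg_log_lower {x : ℝ} (hx0 : 0 < x) (hx1 : x ≤ 1) :
    2 * (1 - x) / (1 + x) ≤ -Real.log x := by
  have ht : 1 ≤ x⁻¹ := by
    rw [le_inv_comm₀] <;> simp [hx0, hx1]
  have := pade_log_lower ht
  rw [Real.log_inv] at this
  have heq : 2 * (x⁻¹ - 1) / (x⁻¹ + 1) = 2 * (1 - x) / (1 + x) := by
    rw [div_eq_div_iff (by positivity) (by positivity)]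
    field_simp
  linarith [heq ▸ this]

theorem neg_log_one_add_two_mul_ineq (a : ℝ) (ha : a ∈ Set.Icc (0 : ℝ) (1/2)) :
    0 ≤ -(1 - a) * Real.log (1 + 2 * a) - a * Real.log a := by
  obtain ⟨ha0, ha2⟩ := ha
  rcases eq_or_lt_of_le ha0 with h0 | h0
  · simp [← h0]
  rcases le_or_gt a (1/10) with hcase | hcase
  · -- small a regime
    have hlog1 : Real.log (1 + 2 * a) ≤ 2 * a := by
      have := Real.log_le_sub_one_of_pos (show (0:ℝ) < 1 + 2 * a by linarith)
      linarith
    have hloga : Real.log a ≤ 2 * a - 2 := by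
      rw [Real.log_le_iff_le_exp h0]
      have he2 : Real.exp 2 < 7.39 := by
        have h1 : Real.exp 1 < 2.7182818286 := Real.exp_one_lt_d9
        have h2 : Real.exp 2 = Real.exp 1 * Real.exp 1 := by
          rw [← Real.exp_add]; norm_num
        nlinarith [Real.exp_pos 1]
      have hrw : Real.exp (2 * a - 2) = Real.exp (2 * a) / Real.exp 2 := by
        rw [Real.exp_sub]
      rw [hrw, le_div_iff₀ (Real.exp_pos 2)]
      have h3 : 1 + 2 * a ≤ Real.exp (2 * a) := by
        have := Real.add_one_le_exp (2 * a); linarith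
      nlinarith [Real.exp_pos 2]
    nlinarith [mul_le_mul_of_nonneg_left hlog1 (show (0:ℝ) ≤ 1 - a by linarith),
      mul_le_mul_of_nonneg_left hloga (le_of_lt h0)]
  · -- a ∈ (1/10, 1/2]
    have h2a : Real.log (2 * a) = Real.log 2 + Real.log a :=
      Real.log_mul two_ne_zero h0.ne'
    have hmid : Real.log ((1 + 2 * a) / 2) = Real.log (1 + 2 * a) - Real.log 2 :=
      Real.log_div (by linarith) two_ne_zero
    have H1 : 2 * (1 - 2 * a) / (1 + 2 * a) ≤ -Real.log (2 * a) :=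
      neg_log_lower (by linarith) (by linarith)
    have H2 : 2 * (1 - (1 + 2 * a) / 2) / (1 + (1 + 2 * a) / 2) ≤ -Real.log ((1 + 2 * a) / 2) :=
      neg_log_lower (by linarith) (by linarith)
    have hl2 : Real.log 2 < 0.6931471808 := Real.log_two_lt_d9
    have hl2' : 0 < Real.log 2 := Real.log_pos (by norm_num)
    -- rewrite goal
    have key : 0 ≤ (2 * a - 1) * Real.log 2 + a * (-Real.log (2 * a))
        + (1 - a) * (-Real.log ((1 + 2 * a) / 2)) := by
      have e1 : 2 * (1 - (1 + 2 * a) / 2) / (1 + (1 + 2 * a) / 2) = 2 * (1 - 2 * a) / (3 + 2 * a) := by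
        rw [div_eq_div_iff (by linarith) (by linarith)]
        ring
      rw [e1] at H2
      have d1 : (0:ℝ) < 1 + 2 * a := by linarith
      have d2 : (0:ℝ) < 3 + 2 * a := by linarith
      have k1 : a * (2 * (1 - 2 * a) / (1 + 2 * a)) ≤ a * (-Real.log (2 * a)) :=
        mul_le_mul_of_nonneg_left H1 (by linarith)
      have k2 : (1 - a) * (2 * (1 - 2 * a) / (3 + 2 * a)) ≤ (1 - a) * (-Real.log ((1 + 2 * a) / 2)) :=
        mul_le_mul_of_nonneg_left H2 (by linarith)
      have main : 0 ≤ (2 * a - 1) * Real.log 2 + a * (2 * (1 - 2 * a) / (1 + 2 * a))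
          + (1 - a) * (2 * (1 - 2 * a) / (3 + 2 * a)) := by
        have expand : (2 * a - 1) * Real.log 2 + a * (2 * (1 - 2 * a) / (1 + 2 * a))
            + (1 - a) * (2 * (1 - 2 * a) / (3 + 2 * a))
            = (1 - 2 * a) * ((2 * a * (3 + 2 * a) + 2 * (1 - a) * (1 + 2 * a)
              - Real.log 2 * (1 + 2 * a) * (3 + 2 * a)) / ((1 + 2 * a) * (3 + 2 * a))) := by
          field_simp
          ring
        rw [expand]
        apply mul_nonneg (by linarith)
        apply div_nonneg _ (by nlinarith)
        nlinarith [sq_nonneg (a - 1/2), mul_pos (show (0:ℝ) < a - 1/10 + 1/10 by linarith) hl2']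
      linarith
    rw [h2a, hmid] at key
    linarith
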